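/- Let S = {x ∈ ℝ^d : q_1(x) ≥ 0, …, q_k(x) ≥ 0} for real polynomials q_1, …, q_k in d variables, and let s ∈ ℕ be such that for every x ∈ S at most s of the polynomials q_1, …, q_k vanish at x. For i = 1, …, s define the polynomial p_i(x) := σ_{k−s+i}(q_1(x), …, q_k(x)). Then S ⊆ {x ∈ ℝ^d : p_1(x) ≥ 0, …, p_s(x) ≥ 0}, and for every x ∈ S there exists ε > 0 such that S ∩ B(x, ε) = {y ∈ ℝ^d : p_1(y) ≥ 0, …, p_s(y) ≥ 0} ∩ B(x, ε). -/

import Mathlib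

open MvPolynomial Filter

/-- Evaluation of a `d`-variate real polynomial at a point of `ℝ^d`. -/
noncomputable def pev {d : ℕ} (p : MvPolynomial (Fin d) ℝ) (x : EuclideanSpace ℝ (Fin d)) : ℝ :=
  MvPolynomial.eval (fun i => x i) p

/-- A basic closed semialgebraic set in `ℝ^d`. -/
def IsBasicClosed {d : ℕ} (S : Set (EuclideanSpace ℝ (Fin d))) : Prop :=
  ∃ (k : ℕ) (q : Fin k → MvPolynomial (Fin d) ℝ), S = {x | ∀ i, 0 ≤ pev (q i) x}

/-- A closed semialgebraic set: a finite union of basic closed semialgebraic sets. -/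
def IsClosedSemialg {d : ℕ} (S : Set (EuclideanSpace ℝ (Fin d))) : Prop :=
  ∃ (n : ℕ) (F : Fin n → Set (EuclideanSpace ℝ (Fin d))),
    (∀ i, IsBasicClosed (F i)) ∧ S = ⋃ i, F i

/-- The `i`-th elementary symmetric function of `a 0, …, a (k-1)`. -/
noncomputable def esymmVal {k : ℕ} (a : Fin k → ℝ) (i : ℕ) : ℝ :=
  ∑ t ∈ Finset.powersetCard i (Finset.univ : Finset (Fin k)), ∏ j ∈ t, a j

lemma pev_continuous {d : ℕ} (p : MvPolynomial (Fin d) ℝ) : Continuous (pev p) := by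
  have h1 : Continuous fun x : EuclideanSpace ℝ (Fin d) => (fun i => x i) :=
    continuous_pi fun i => (EuclideanSpace.proj i).continuous
  exact (MvPolynomial.continuous_eval (p := p)).comp h1

lemma esymmVal_continuous {d k : ℕ} (q : Fin k → MvPolynomial (Fin d) ℝ) (i : ℕ) :
    Continuous fun x => esymmVal (fun j => pev (q j) x) i := by
  unfold esymmVal
  exact continuous_finset_sum _ fun t _ =>
    continuous_finset_prod _ fun j _ => pev_continuous (q j)

lemma prod_add_const {k : ℕ} (c : Fin k → ℝ) (β : ℝ) :
    ∏ j, (c j + β) = ∑ i ∈ Finset.range (k+1), esymmVal c i * β ^ (k - i) := by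
  classical
  rw [Finset.prod_add, Finset.powerset_card_disjiUnion]; erw [Finset.sum_disjiUnion]
  rw [show (Finset.univ : Finset (Fin k)).card = k by simp]
  refine Finset.sum_congr rfl fun i hi => ?_
  rw [esymmVal, Finset.sum_mul]
  refine Finset.sum_congr rfl fun t ht => ?_
  obtain ⟨hts, htc⟩ := Finset.mem_powersetCard.mp ht
  rw [Finset.prod_const, Finset.card_sdiff_of_subset hts, htc]
  simp

lemma esymmVal_nonneg {k : ℕ} {a : Fin k → ℝ} (ha : ∀ j, 0 ≤ a j) (i : ℕ) :
    0 ≤ esymmVal a i :=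
  Finset.sum_nonneg fun t _ => Finset.prod_nonneg fun j _ => ha j

lemma esymmVal_pos {k s : ℕ} {a : Fin k → ℝ} (ha : ∀ j, 0 ≤ a j)
    (hcard : Set.ncard {j : Fin k | a j = 0} ≤ s) {i : ℕ} (hi : i ≤ k - s) :
    0 < esymmVal a i := by
  classical
  have hZ : {j : Fin k | a j = 0} = ↑(Finset.univ.filter fun j => a j = 0) := by
    ext j; simp
  rw [hZ, Set.ncard_coe_finset] at hcard
  set P := Finset.univ.filter fun j : Fin k => ¬ a j = 0 with hP
  have hsum : (Finset.univ.filter fun j : Fin k => a j = 0).card + P.card = k := by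
    rw [Finset.card_filter_add_card_filter_not]; simp
  have hiP : i ≤ P.card := by omega
  obtain ⟨T, hTP, hTcard⟩ := Finset.exists_subset_card_eq (s := P) hiP
  have hT : T ∈ Finset.powersetCard i (Finset.univ : Finset (Fin k)) :=
    Finset.mem_powersetCard.mpr ⟨Finset.subset_univ T, hTcard⟩
  have hTpos : 0 < ∏ j ∈ T, a j := by
    refine Finset.prod_pos fun j hj => ?_
    have := hTP hj
    rw [hP, Finset.mem_filter] at this
    exact lt_of_le_of_ne (ha j) (Ne.symm this.2)
  refine lt_of_lt_of_le hTpos ?_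
  rw [esymmVal]
  exact Finset.single_le_sum (f := fun t => ∏ j ∈ t, a j)
    (fun t _ => Finset.prod_nonneg fun j _ => ha j) hT

/-- Let `S = {q₁ ≥ 0, …, q_k ≥ 0}` and suppose at every point of `S` at most `s` of the
`qᵢ` vanish. With `pᵢ(x) := σ_{k-s+i}(q₁(x), …, q_k(x))` for `i = 1, …, s`, one has
`S ⊆ {p₁ ≥ 0, …, p_s ≥ 0}` and around every point of `S` the two sets coincide. -/
theorem esymm_local_representation {d k s : ℕ}
    (S : Set (EuclideanSpace ℝ (Fin d)))
    (q : Fin k → MvPolynomial (Fin d) ℝ)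
    (hS : S = {x | ∀ i, 0 ≤ pev (q i) x})
    (hvanish : ∀ x ∈ S, Set.ncard {i : Fin k | pev (q i) x = 0} ≤ s) :
    (S ⊆ {x | ∀ i : Fin s, 0 ≤ esymmVal (fun j => pev (q j) x) (k - s + (i : ℕ) + 1)}) ∧
    ∀ x ∈ S, ∃ ε > (0 : ℝ),
      S ∩ Metric.closedBall x ε =
        {y | ∀ i : Fin s, 0 ≤ esymmVal (fun j => pev (q j) y) (k - s + (i : ℕ) + 1)} ∩
          Metric.closedBall x ε := by
  have hsub : S ⊆ {x | ∀ i : Fin s,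
      0 ≤ esymmVal (fun j => pev (q j) x) (k - s + (i : ℕ) + 1)} := by
    intro x hx i
    rw [hS] at hx
    exact esymmVal_nonneg hx _
  refine ⟨hsub, fun x hx => ?_⟩
  -- the open set where all low elementary symmetric values are positive
  set U : Set (EuclideanSpace ℝ (Fin d)) :=
    {y | ∀ i ∈ Finset.range (k - s + 1), 0 < esymmVal (fun j => pev (q j) y) i} with hU
  have hUopen : IsOpen U := by
    have : U = ⋂ i ∈ Finset.range (k - s + 1),
        (fun y => esymmVal (fun j => pev (q j) y) i) ⁻¹' Set.Ioi 0 := by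
      ext y; simp [hU]
    rw [this]
    exact isOpen_biInter_finset fun i _ => isOpen_Ioi.preimage (esymmVal_continuous q i)
  have hxU : x ∈ U := by
    intro i hi
    have hx' : ∀ j, 0 ≤ pev (q j) x := by rw [hS] at hx; exact hx
    exact esymmVal_pos hx' (hvanish x hx) (Nat.lt_succ_iff.mp (Finset.mem_range.mp hi))
  obtain ⟨r, hr, hball⟩ := Metric.isOpen_iff.mp hUopen x hxU
  refine ⟨r / 2, by linarith, ?_⟩
  have hcb : Metric.closedBall x (r / 2) ⊆ U :=
    fun y hy => hball (Metric.closedBall_subset_ball (by linarith) hy)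
  ext y
  constructor
  · rintro ⟨hyS, hyb⟩
    exact ⟨hsub hyS, hyb⟩
  · rintro ⟨hps, hyb⟩
    refine ⟨?_, hyb⟩
    rw [hS]
    set c : Fin k → ℝ := fun j => pev (q j) y with hc
    intro j0
    by_contra hneg
    push_neg at hneg
    -- pick the minimizer of c
    obtain ⟨jm, _, hjm⟩ := Finset.exists_min_image Finset.univ c ⟨j0, Finset.mem_univ j0⟩
    set β : ℝ := -(c jm) with hβ
    have hβpos : 0 < β := by
      have := hjm j0 (Finset.mem_univ j0)
      simp only [hβ]; linarith
    have hzero : ∏ j, (c j + β) = 0 :=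
      Finset.prod_eq_zero (Finset.mem_univ jm) (by simp [hβ])
    have hsumpos : 0 < ∑ i ∈ Finset.range (k+1), esymmVal c i * β ^ (k - i) := by
      refine Finset.sum_pos' ?_ ⟨0, Finset.mem_range.mpr (Nat.succ_pos k), ?_⟩
      · intro i hi
        rcases le_or_gt i (k - s) with h | h
        · exact le_of_lt (mul_pos (hcb hyb i (Finset.mem_range.mpr (by omega)))
            (pow_pos hβpos _))
        · have hik : i ≤ k := Nat.lt_succ_iff.mp (Finset.mem_range.mp hi)
          have hi' : i - (k - s) - 1 < s := by omega
          have heq : k - s + (i - (k - s) - 1) + 1 = i := by omega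
          have := hps ⟨i - (k - s) - 1, hi'⟩
          simp only [heq] at this
          exact mul_nonneg this (le_of_lt (pow_pos hβpos _))
      · have h0 : 0 < esymmVal c 0 := hcb hyb 0 (Finset.mem_range.mpr (by omega))
        exact mul_pos h0 (pow_pos hβpos _)
    rw [← prod_add_const] at hsumpos
    rw [hzero] at hsumpos
    exact lt_irrefl 0 hsumpos
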